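/- Let G be a graph with m edges admitting a linear arrangement with edge separation number at most w. Then placing the vertices in convex position according to the arrangement and drawing edges as straight chords yields a drawing with at most 2wm crossings; hence G has a planarization with at most |V(G)| + 2wm vertices. -/

import Mathlib

open scoped Classical

/-- Two chords of a convex polygon, recorded as unordered pairs of positions
on the circle, cross when their endpoints interleave: `a < c < b < d`. -/
def ChordsCross {n : ℕ} (e f : Sym2 (Fin n)) : Prop :=
  ∃ a b c d : Fin n, e = s(a, b) ∧ f = s(c, d) ∧ a < c ∧ c < b ∧ b < d

/-- Number of edges crossing the prefix–suffix cut at position `k`. -/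
noncomputable def cutEdges {n : ℕ} (G : SimpleGraph (Fin n)) (k : ℕ) : ℕ :=
  (G.edgeFinset.filter fun e =>
    ∃ u : Fin n, u ∈ e ∧ ∃ v : Fin n, v ∈ e ∧ (u : ℕ) < k ∧ k ≤ (v : ℕ)).card

lemma fiber_le {n w : ℕ} (G : SimpleGraph (Fin n))
    (hw : ∀ k : ℕ, k ≤ n → cutEdges G k ≤ w) (e : Sym2 (Fin n))
    (he : e ∈ G.edgeFinset) :
    (((G.edgeFinset ×ˢ G.edgeFinset).filter fun q => ChordsCross q.1 q.2).filter
      fun q => q.1 = e).card ≤ w := by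
  induction e using Sym2.ind with
  | _ x y =>
    set k : ℕ := ((max x y : Fin n) : ℕ) with hk
    have hkn : k ≤ n := le_of_lt (Fin.is_lt _)
    refine le_trans ?_ (hw k hkn)
    unfold cutEdges
    apply Finset.card_le_card_of_injOn (fun q => q.2)
    · intro q hq
      simp only [Finset.mem_coe, Finset.mem_filter, Finset.mem_product] at hq
      obtain ⟨⟨⟨hq1, hq2⟩, hcross⟩, hq1e⟩ := hq
      obtain ⟨a, b, c, d, hea, hfc, hac, hcb, hbd⟩ := hcross
      have hbk : (b : ℕ) = k := by
        rw [hq1e] at hea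
        rw [Sym2.eq_iff] at hea
        have hab : a < b := lt_trans hac hcb
        rcases hea with ⟨hxa, hyb⟩ | ⟨hxb, hya⟩
        · rw [hk, hxa, hyb, max_eq_right (le_of_lt hab)]
        · rw [hk, hxb, hya, max_eq_left (le_of_lt hab)]
      refine Finset.mem_filter.mpr ⟨hq2, c, ?_, d, ?_, ?_, ?_⟩
      · beta_reduce; rw [hfc]; exact Sym2.mem_mk_left _ _
      · beta_reduce; rw [hfc]; exact Sym2.mem_mk_right _ _
      · rw [← hbk]; exact hcb
      · rw [← hbk]; exact le_of_lt hbd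
    · intro q hq q' hq' hqq'
      simp only [Finset.mem_coe, Finset.mem_filter] at hq hq'
      exact Prod.ext (hq.2.trans hq'.2.symm) hqq'

/-- A graph with a linear arrangement of edge separation number at most `w`,
drawn in convex position, has at most `2wm` crossings; hence a planarization
with at most `n + 2wm` vertices. -/
theorem stmt_18 (n w : ℕ) (G : SimpleGraph (Fin n))
    (hw : ∀ k : ℕ, k ≤ n → cutEdges G k ≤ w) :
    ((G.edgeFinset ×ˢ G.edgeFinset).filter fun q => ChordsCross q.1 q.2).card
        ≤ 2 * w * G.edgeFinset.card ∧
      n + ((G.edgeFinset ×ˢ G.edgeFinset).filter fun q => ChordsCross q.1 q.2).card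
        ≤ n + 2 * w * G.edgeFinset.card := by
  have H : ((G.edgeFinset ×ˢ G.edgeFinset).filter fun q => ChordsCross q.1 q.2).card
      ≤ 2 * w * G.edgeFinset.card := by
    have hfib : ∀ q ∈ (G.edgeFinset ×ˢ G.edgeFinset).filter
        (fun q => ChordsCross q.1 q.2), q.1 ∈ G.edgeFinset := by
      intro q hq
      exact (Finset.mem_product.mp (Finset.mem_filter.mp hq).1).1
    rw [Finset.card_eq_sum_card_fiberwise hfib]
    calc ∑ e ∈ G.edgeFinset,
          (((G.edgeFinset ×ˢ G.edgeFinset).filter fun q => ChordsCross q.1 q.2).filter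
            fun q => q.1 = e).card
        ≤ ∑ _e ∈ G.edgeFinset, w := by
          exact Finset.sum_le_sum (fun e he => fiber_le G hw e he)
      _ = w * G.edgeFinset.card := by rw [Finset.sum_const, smul_eq_mul, mul_comm]
      _ ≤ 2 * w * G.edgeFinset.card := by nlinarith
  exact ⟨H, Nat.add_le_add_left H n⟩
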